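/- Let u : V_{m+1} → ℝ. Then E_{m+1}(u) ≥ E_m(u restricted to V_m), and equality holds if and only if u is the harmonic (1/5–2/5) extension of its restriction to V_m, i.e. for every word ω ∈ {1,2,3}^m and every permutation (i,j,k) of (1,2,3), u(P_ω(P_i(q_j))) = (2/5)u(P_ω(q_i)) + (2/5)u(P_ω(q_j)) + (1/5)u(P_ω(q_k)). -/
import Mathlib


open Finset Filter

noncomputable section

/-- Points in the plane. -/
abbrev Pt := Fin 2 → ℝ

/-- The three contraction maps `P_i(x) = (x + q_i)/2`. -/
def Pmap (q : Fin 3 → Pt) (i : Fin 3) (x : Pt) : Pt := (x + q i) / 2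

/-- `Pw q m ω = P_{ω 0} ∘ P_{ω 1} ∘ ⋯ ∘ P_{ω (m-1)}` for a word `ω` of length `m`. -/
def Pw (q : Fin 3 → Pt) : (m : ℕ) → (Fin m → Fin 3) → Pt → Pt
  | 0, _, x => x
  | m + 1, ω, x => Pmap q (ω 0) (Pw q m (fun k => ω k.succ) x)

/-- The level-`m` vertex set `V_m`. -/
def V (q : Fin 3 → Pt) (m : ℕ) : Set Pt :=
  {x | ∃ ω : Fin m → Fin 3, ∃ i : Fin 3, x = Pw q m ω (q i)}

/-- `V_* = ⋃ m, V_m`. -/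
def Vstar (q : Fin 3 → Pt) : Set Pt := ⋃ m, V q m

/-- The Sierpinski gasket, as the closure of `V_*`. -/
def SG (q : Fin 3 → Pt) : Set Pt := closure (Vstar q)

/-- The level-`m` graph energy. -/
def energy (q : Fin 3 → Pt) (m : ℕ) (u : Pt → ℝ) : ℝ :=
  (5/3 : ℝ)^m * ∑ ω : Fin m → Fin 3,
    ∑ p ∈ Finset.univ.filter (fun p : Fin 3 × Fin 3 => p.1 < p.2),
      (u (Pw q m ω (q p.1)) - u (Pw q m ω (q p.2)))^2

/-- The level-`m` bilinear graph energy. -/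
def energyBil (q : Fin 3 → Pt) (m : ℕ) (u v : Pt → ℝ) : ℝ :=
  (5/3 : ℝ)^m * ∑ ω : Fin m → Fin 3,
    ∑ p ∈ Finset.univ.filter (fun p : Fin 3 × Fin 3 => p.1 < p.2),
      (u (Pw q m ω (q p.1)) - u (Pw q m ω (q p.2))) *
        (v (Pw q m ω (q p.1)) - v (Pw q m ω (q p.2)))

open scoped Classical in
/-- The level-`m` graph Laplacian at `x`. -/
def graphLap (q : Fin 3 → Pt) (m : ℕ) (u : Pt → ℝ) (x : Pt) : ℝ :=
  ∑ ω : Fin m → Fin 3,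
    ∑ p ∈ Finset.univ.filter (fun p : Fin 3 × Fin 3 => p.1 ≠ p.2 ∧ Pw q m ω (q p.1) = x),
      (u (Pw q m ω (q p.2)) - u x)

/-- A function is harmonic on `SG` if it is continuous on `SG` and satisfies
the `1/5-2/5` rule. -/
def IsHarmonic (q : Fin 3 → Pt) (h : Pt → ℝ) : Prop :=
  ContinuousOn h (SG q) ∧
  ∀ (m : ℕ) (ω : Fin m → Fin 3) (i j k : Fin 3), i ≠ j → j ≠ k → i ≠ k →
    h (Pw q m ω (Pmap q i (q j))) =
      2/5 * h (Pw q m ω (q i)) + 2/5 * h (Pw q m ω (q j)) + 1/5 * h (Pw q m ω (q k))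

/-- `f` is a fractal interpolation function on `SG` with vertical scaling factors `d i`. -/
def IsFIF (q : Fin 3 → Pt) (d : Fin 3 → ℝ) (f : Pt → ℝ) : Prop :=
  ContinuousOn f (SG q) ∧
  ∃ h : Fin 3 → Pt → ℝ, (∀ i, IsHarmonic q (h i)) ∧
    ∀ i, ∀ x ∈ SG q, f (Pmap q i x) = d i * f x + h i x


lemma pair_sum (f : Fin 3 × Fin 3 → ℝ) :
    ∑ p ∈ Finset.univ.filter (fun p : Fin 3 × Fin 3 => p.1 < p.2), f p
      = f (0,1) + f (0,2) + f (1,2) := by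
  have h : Finset.univ.filter (fun p : Fin 3 × Fin 3 => p.1 < p.2)
      = {((0:Fin 3),(1:Fin 3)), ((0:Fin 3),(2:Fin 3)), ((1:Fin 3),(2:Fin 3))} := by decide
  rw [h, Finset.sum_insert (by decide), Finset.sum_insert (by decide), Finset.sum_singleton]
  ring

lemma Pmap_self (q : Fin 3 → Pt) (i : Fin 3) : Pmap q i (q i) = q i := by
  funext t
  show (q i t + q i t) / 2 = q i t
  ring

lemma Pmap_comm (q : Fin 3 → Pt) (i j : Fin 3) : Pmap q i (q j) = Pmap q j (q i) := by
  funext t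
  show (q j t + q i t) / 2 = (q i t + q j t) / 2
  ring

lemma Pw_snoc (q : Fin 3 → Pt) : ∀ (m : ℕ) (ω : Fin m → Fin 3) (i : Fin 3) (x : Pt),
    Pw q (m+1) (Fin.snoc ω i) x = Pw q m ω (Pmap q i x) := by
  intro m
  induction m with
  | zero => intro ω i x; simp [Pw, Fin.snoc]
  | succ n ih =>
    intro ω i x
    set ω' : Fin (n+2) → Fin 3 := Fin.snoc ω i with hω'
    have h0 : ω' 0 = ω 0 := by
      have h : (0 : Fin (n+2)) = Fin.castSucc 0 := rfl
      rw [hω', h, Fin.snoc_castSucc]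
    have h1 : (fun k : Fin (n+1) => ω' k.succ)
        = Fin.snoc (fun k : Fin n => ω k.succ) i := by
      funext k
      induction k using Fin.lastCases with
      | last => rw [hω', Fin.succ_last, Fin.snoc_last, Fin.snoc_last]
      | cast j => rw [hω', Fin.succ_castSucc, Fin.snoc_castSucc, Fin.snoc_castSucc]
    show Pmap q (ω' 0) (Pw q (n+1) (fun k => ω' k.succ) x)
      = Pmap q (ω 0) (Pw q n (fun k => ω k.succ) (Pmap q i x))
    rw [h0, h1, ih]

lemma cellKey (a b c x y z S : ℝ)
    (hS : S = ((a-x)^2+(a-y)^2+(x-y)^2) + ((x-b)^2+(x-z)^2+(b-z)^2)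
        + ((y-z)^2+(y-c)^2+(z-c)^2)) :
    ((a-b)^2+(a-c)^2+(b-c)^2) ≤ (5/3) * S ∧
    ((5/3) * S = (a-b)^2+(a-c)^2+(b-c)^2 ↔
      x = (2*a+2*b+c)/5 ∧ y = (2*a+2*c+b)/5 ∧ z = (2*b+2*c+a)/5) := by
  have key : (5/3) * S - ((a-b)^2+(a-c)^2+(b-c)^2)
      = (5/3)*(((x-(2*a+2*b+c)/5)-(y-(2*a+2*c+b)/5))^2
          + ((x-(2*a+2*b+c)/5)-(z-(2*b+2*c+a)/5))^2
          + ((y-(2*a+2*c+b)/5)-(z-(2*b+2*c+a)/5))^2)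
        + (10/3)*((x-(2*a+2*b+c)/5)^2 + (y-(2*a+2*c+b)/5)^2 + (z-(2*b+2*c+a)/5)^2) := by
    rw [hS]; ring
  have n1 := sq_nonneg ((x-(2*a+2*b+c)/5)-(y-(2*a+2*c+b)/5))
  have n2 := sq_nonneg ((x-(2*a+2*b+c)/5)-(z-(2*b+2*c+a)/5))
  have n3 := sq_nonneg ((y-(2*a+2*c+b)/5)-(z-(2*b+2*c+a)/5))
  have n4 := sq_nonneg (x-(2*a+2*b+c)/5)
  have n5 := sq_nonneg (y-(2*a+2*c+b)/5)
  have n6 := sq_nonneg (z-(2*b+2*c+a)/5)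
  constructor
  · linarith
  · constructor
    · intro h
      rw [h, sub_self] at key
      have hx : (x-(2*a+2*b+c)/5)^2 = 0 := le_antisymm (by linarith) n4
      have hy : (y-(2*a+2*c+b)/5)^2 = 0 := le_antisymm (by linarith) n5
      have hz : (z-(2*b+2*c+a)/5)^2 = 0 := le_antisymm (by linarith) n6
      rw [sq_eq_zero_iff, sub_eq_zero] at hx hy hz
      exact ⟨hx, hy, hz⟩
    · rintro ⟨hx, hy, hz⟩
      subst hx hy hz
      rw [hS]; ring

/-- level-m edge energy of a cell -/
def Aen (q : Fin 3 → Pt) (m : ℕ) (u : Pt → ℝ) (ω : Fin m → Fin 3) : ℝ :=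
  (u (Pw q m ω (q 0)) - u (Pw q m ω (q 1)))^2
  + (u (Pw q m ω (q 0)) - u (Pw q m ω (q 2)))^2
  + (u (Pw q m ω (q 1)) - u (Pw q m ω (q 2)))^2

/-- level-(m+1) edge energy of the three subcells of a cell -/
def Ben (q : Fin 3 → Pt) (m : ℕ) (u : Pt → ℝ) (ω : Fin m → Fin 3) : ℝ :=
  ((u (Pw q m ω (q 0)) - u (Pw q m ω (Pmap q 0 (q 1))))^2
    + (u (Pw q m ω (q 0)) - u (Pw q m ω (Pmap q 0 (q 2))))^2
    + (u (Pw q m ω (Pmap q 0 (q 1))) - u (Pw q m ω (Pmap q 0 (q 2))))^2)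
  + ((u (Pw q m ω (Pmap q 0 (q 1))) - u (Pw q m ω (q 1)))^2
    + (u (Pw q m ω (Pmap q 0 (q 1))) - u (Pw q m ω (Pmap q 1 (q 2))))^2
    + (u (Pw q m ω (q 1)) - u (Pw q m ω (Pmap q 1 (q 2))))^2)
  + ((u (Pw q m ω (Pmap q 0 (q 2))) - u (Pw q m ω (Pmap q 1 (q 2))))^2
    + (u (Pw q m ω (Pmap q 0 (q 2))) - u (Pw q m ω (q 2)))^2
    + (u (Pw q m ω (Pmap q 1 (q 2))) - u (Pw q m ω (q 2)))^2)

lemma energy_level (q : Fin 3 → Pt) (m : ℕ) (u : Pt → ℝ) :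
    energy q m u = (5/3 : ℝ)^m * ∑ ω : Fin m → Fin 3, Aen q m u ω := by
  unfold energy Aen
  congr 1
  apply Finset.sum_congr rfl
  intro ω _
  rw [pair_sum]

lemma energy_succ (q : Fin 3 → Pt) (m : ℕ) (u : Pt → ℝ) :
    energy q (m+1) u = (5/3 : ℝ)^m * ∑ ω : Fin m → Fin 3, (5/3) * Ben q m u ω := by
  unfold energy
  have hsplit : ∀ F : (Fin (m+1) → Fin 3) → ℝ,
      (∑ ω' : Fin (m+1) → Fin 3, F ω')
        = ∑ ω : Fin m → Fin 3, ∑ i : Fin 3, F (Fin.snoc ω i) := by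
    intro F
    rw [← Equiv.sum_comp (Fin.snocEquiv (fun _ => Fin 3)) F, Fintype.sum_prod_type,
      Finset.sum_comm]
    rfl
  rw [hsplit]
  have hcell : ∀ ω : Fin m → Fin 3,
      (∑ i : Fin 3, ∑ p ∈ Finset.univ.filter (fun p : Fin 3 × Fin 3 => p.1 < p.2),
        (u (Pw q (m+1) (Fin.snoc ω i) (q p.1)) - u (Pw q (m+1) (Fin.snoc ω i) (q p.2)))^2)
      = Ben q m u ω := by
    intro ω
    rw [Fin.sum_univ_three]
    simp only [pair_sum, Pw_snoc]
    rw [Pmap_self q 0, Pmap_self q 1, Pmap_self q 2,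
      Pmap_comm q 1 0, Pmap_comm q 2 0, Pmap_comm q 2 1]
    unfold Ben
    ring
  rw [Finset.sum_congr rfl (fun ω _ => hcell ω), ← Finset.mul_sum, pow_succ]
  ring

/-- `E_{m+1}(u) ≥ E_m(u)`, with equality iff `u` is the harmonic
(1/5–2/5) extension of its restriction to `V_m`. -/
theorem stmt_1 (q : Fin 3 → Pt) (hq : AffineIndependent ℝ q) (m : ℕ) (u : Pt → ℝ) :
    energy q m u ≤ energy q (m+1) u ∧
    (energy q (m+1) u = energy q m u ↔
      ∀ (ω : Fin m → Fin 3) (i j k : Fin 3), i ≠ j → j ≠ k → i ≠ k →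
        u (Pw q m ω (Pmap q i (q j))) =
          2/5 * u (Pw q m ω (q i)) + 2/5 * u (Pw q m ω (q j)) + 1/5 * u (Pw q m ω (q k))) := by

  have hp : (0:ℝ) < (5/3:ℝ)^m := by positivity
  have key : ∀ ω : Fin m → Fin 3,
      Aen q m u ω ≤ (5/3) * Ben q m u ω ∧
      ((5/3) * Ben q m u ω = Aen q m u ω ↔
        u (Pw q m ω (Pmap q 0 (q 1)))
          = (2*u (Pw q m ω (q 0))+2*u (Pw q m ω (q 1))+u (Pw q m ω (q 2)))/5 ∧
        u (Pw q m ω (Pmap q 0 (q 2)))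
          = (2*u (Pw q m ω (q 0))+2*u (Pw q m ω (q 2))+u (Pw q m ω (q 1)))/5 ∧
        u (Pw q m ω (Pmap q 1 (q 2)))
          = (2*u (Pw q m ω (q 1))+2*u (Pw q m ω (q 2))+u (Pw q m ω (q 0)))/5) :=
    fun ω => cellKey (u (Pw q m ω (q 0))) (u (Pw q m ω (q 1))) (u (Pw q m ω (q 2)))
      (u (Pw q m ω (Pmap q 0 (q 1)))) (u (Pw q m ω (Pmap q 0 (q 2))))
      (u (Pw q m ω (Pmap q 1 (q 2)))) (Ben q m u ω) rfl
  rw [energy_level, energy_succ]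
  constructor
  · exact mul_le_mul_of_nonneg_left (Finset.sum_le_sum (fun ω _ => (key ω).1)) hp.le
  constructor
  · intro h
    have h2 : ∑ ω : Fin m → Fin 3, ((5/3) * Ben q m u ω - Aen q m u ω) = 0 := by
      rw [Finset.sum_sub_distrib]
      have h1 := mul_left_cancel₀ (ne_of_gt hp) h
      rw [h1, sub_self]
    have h3 := (Finset.sum_eq_zero_iff_of_nonneg
      (fun ω _ => by linarith [(key ω).1] : ∀ ω ∈ Finset.univ,
        0 ≤ (5/3) * Ben q m u ω - Aen q m u ω)).1 h2
    intro ω i j k hij hjk hik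
    have h4 : (5/3) * Ben q m u ω = Aen q m u ω := by
      have := h3 ω (Finset.mem_univ ω); linarith
    obtain ⟨e1, e2, e3⟩ := (key ω).2.1 h4
    have s10 : u (Pw q m ω (Pmap q 1 (q 0))) = u (Pw q m ω (Pmap q 0 (q 1))) := by
      rw [Pmap_comm]
    have s20 : u (Pw q m ω (Pmap q 2 (q 0))) = u (Pw q m ω (Pmap q 0 (q 2))) := by
      rw [Pmap_comm]
    have s21 : u (Pw q m ω (Pmap q 2 (q 1))) = u (Pw q m ω (Pmap q 1 (q 2))) := by
      rw [Pmap_comm]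
    have tri : ∀ i j k : Fin 3, i ≠ j → j ≠ k → i ≠ k →
        (i,j,k) = ((0:Fin 3),(1:Fin 3),(2:Fin 3)) ∨ (i,j,k) = (0,2,1) ∨ (i,j,k) = (1,0,2)
          ∨ (i,j,k) = (1,2,0) ∨ (i,j,k) = (2,0,1) ∨ (i,j,k) = (2,1,0) := by decide
    rcases tri i j k hij hjk hik with h|h|h|h|h|h <;>
        (simp only [Prod.mk.injEq] at h; obtain ⟨rfl, rfl, rfl⟩ := h) <;>
      first
        | linarith
        | (rw [s10]; linarith)
        | (rw [s20]; linarith)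
        | (rw [s21]; linarith)
  · intro H
    have h4 : ∀ ω ∈ (Finset.univ : Finset (Fin m → Fin 3)),
        (5/3) * Ben q m u ω = Aen q m u ω := by
      intro ω _
      apply (key ω).2.2
      refine ⟨?_, ?_, ?_⟩
      · have := H ω 0 1 2 (by decide) (by decide) (by decide); linarith
      · have := H ω 0 2 1 (by decide) (by decide) (by decide); linarith
      · have := H ω 1 2 0 (by decide) (by decide) (by decide); linarith
    rw [Finset.sum_congr rfl h4]


end
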